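/- Assume char F = p > 0 and that h' = 0 (equivalently, h is a polynomial in x^p, so h(x) is central in A_h). Then the image of D₂ equals [x, A_h] + [ŷ, A_h], i.e., {D₂(α, β) : α, β ∈ A_h} = {(xb − bx) + (ŷc − cŷ) : b, c ∈ A_h}. -/

import Mathlib

open Polynomial TensorProduct
open scoped Classical

noncomputable section

/-- The single defining relation `Y·X = X·Y + 1` of the Weyl algebra. -/
inductive WeylRel (F : Type) [Field F] :
    FreeAlgebra F (Fin 2) → FreeAlgebra F (Fin 2) → Prop
  | rel : WeylRel F (FreeAlgebra.ι F (1 : Fin 2) * FreeAlgebra.ι F (0 : Fin 2))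
      (FreeAlgebra.ι F (0 : Fin 2) * FreeAlgebra.ι F (1 : Fin 2) + 1)

/-- The first Weyl algebra `A₁` over `F`. -/
abbrev Weyl (F : Type) [Field F] : Type := RingQuot (WeylRel F)

variable (F : Type) [Field F]

/-- The image `x` of the generator `X` in the Weyl algebra. -/
def wx : Weyl F := RingQuot.mkAlgHom F (WeylRel F) (FreeAlgebra.ι F (0 : Fin 2))

/-- The image `y` of the generator `Y` in the Weyl algebra. -/
def wy : Weyl F := RingQuot.mkAlgHom F (WeylRel F) (FreeAlgebra.ι F (1 : Fin 2))

/-- The subalgebra `A_h ⊆ A₁` generated by `x` and `ŷ = y·h(x)`. -/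
def Ah (h : F[X]) : Subalgebra F (Weyl F) :=
  Algebra.adjoin F {wx F, wy F * aeval (wx F) h}

/-- The monic greatest common divisor of two polynomials over a field. -/
def mgcd (f g : F[X]) : F[X] := normalize (EuclideanDomain.gcd f g)

/-- Generic noncommutative-ring identities (proved over an arbitrary ring to
avoid `RingQuot` instance-matching issues with `simp`). -/
lemma ring1 {R : Type*} [Ring R] (x b c : R) :
    x * b - b * x + (x * c - c * x) = x * (b + c) - (b + c) * x := by noncomm_ring

lemma ring3 {R : Type*} [Ring R] (x b : R) :
    x * (x * b - b * x) = x * (x * b) - (x * b) * x := by noncomm_ring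

lemma ring4' {R : Type*} [Ring R] (x b u : R) (hc : x * u = u * x) :
    (x * b - b * x) * u = x * (b * u) - (b * u) * x := by
  rw [sub_mul, mul_assoc x b u, mul_assoc b x u, hc, ← mul_assoc b u x]

lemma ring4 {R : Type*} [Ring R] (x b : R) (m : ℕ) :
    (x * b - b * x) * x ^ m = x * (b * x ^ m) - (b * x ^ m) * x :=
  ring4' x b (x ^ m) ((Commute.refl x).pow_right m).eq

lemma ring5' {R : Type*} [Ring R] (x u α : R) (hc : x * u = u * x) :
    u * x * α - α * (u * x) = x * (u * α - α * u) + (x * α - α * x) * u := by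
  rw [← hc]; noncomm_ring

lemma ring5 {R : Type*} [Ring R] (x α : R) (n : ℕ) :
    x ^ (n + 1) * α - α * x ^ (n + 1)
      = x * (x ^ n * α - α * x ^ n) + (x * α - α * x) * x ^ n := by
  rw [pow_succ x n]
  exact ring5' x (x ^ n) α ((Commute.refl x).pow_right n).eq

lemma ring6 {R : Type*} [Ring R] (x α : R) (ℓ m : ℕ) :
    x ^ ℓ * α * x ^ m = (x ^ ℓ * α - α * x ^ ℓ) * x ^ m + α * (x ^ ℓ * x ^ m) := by
  noncomm_ring

lemma ring7 {R : Type*} [Ring R] (x yh α β b₀ : R) :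
    β * x - x * β + (yh * α - α * yh) - (x * b₀ - b₀ * x)
      = x * (-β - b₀) - (-β - b₀) * x + (yh * α - α * yh) := by noncomm_ring

lemma ring8 {R : Type*} [Ring R] (x yh b b' b₀ : R) :
    x * b - b * x + (yh * b' - b' * yh)
      = -(b + b₀) * x - x * -(b + b₀) + (yh * b' - b' * yh) - (x * b₀ - b₀ * x) := by
  noncomm_ring

/-- Key lemma: if `h' = 0` then `F_α(h)` is a commutator `[x, b]` with `b ∈ A_h`. -/
lemma key_lemma (h : F[X]) (hder : derivative h = 0)
    (Fm : Weyl F → (F[X] →ₗ[F] Weyl F))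
    (hFm : ∀ (α : Weyl F) (s : ℕ), Fm α (X ^ s) =
      ∑ ℓ ∈ Finset.range s, wx F ^ ℓ * α * wx F ^ (s - 1 - ℓ))
    (α : Weyl F) (hα : α ∈ Ah F h) :
    ∃ b ∈ Ah F h, Fm α h = wx F * b - b * wx F := by
  have hxA : wx F ∈ Ah F h := Algebra.subset_adjoin (Or.inl rfl)
  set x := wx F with hxdef
  set S : Set (Weyl F) := {w | ∃ b ∈ Ah F h, w = x * b - b * x} with hSdef
  have hS0 : (0 : Weyl F) ∈ S := ⟨0, zero_mem _, by rw [mul_zero, zero_mul, sub_zero]⟩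
  have hSadd : ∀ u ∈ S, ∀ v ∈ S, u + v ∈ S := by
    rintro u ⟨b, hb, rfl⟩ v ⟨c, hc, rfl⟩
    exact ⟨b + c, add_mem hb hc, ring1 x b c⟩
  have hSsmul : ∀ (c : F), ∀ u ∈ S, c • u ∈ S := by
    rintro c u ⟨b, hb, rfl⟩
    exact ⟨c • b, SMulMemClass.smul_mem c hb, by
      rw [smul_sub, mul_smul_comm, smul_mul_assoc]⟩
  have hSsum : ∀ (t : Finset ℕ) (f : ℕ → Weyl F),
      (∀ i ∈ t, f i ∈ S) → ∑ i ∈ t, f i ∈ S := fun t f hf =>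
    Finset.sum_induction f (· ∈ S) (fun a b ha hb => hSadd a ha b hb) hS0 hf
  have hSxl : ∀ u ∈ S, x * u ∈ S := by
    rintro u ⟨b, hb, rfl⟩
    exact ⟨x * b, mul_mem hxA hb, ring3 x b⟩
  have hSxr : ∀ u ∈ S, ∀ m : ℕ, u * x ^ m ∈ S := by
    rintro u ⟨b, hb, rfl⟩ m
    exact ⟨b * x ^ m, mul_mem hb (pow_mem hxA m), ring4 x b m⟩
  have hcomm : ∀ ℓ : ℕ, x ^ ℓ * α - α * x ^ ℓ ∈ S := by
    intro ℓ
    induction ℓ with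
    | zero => simpa using hS0
    | succ n ih =>
      rw [ring5 x α n]
      exact hSadd _ (hSxl _ ih) _ (hSxr _ ⟨α, hα, rfl⟩ n)
  have hterm : ∀ s : ℕ,
      h.coeff s • (∑ ℓ ∈ Finset.range s, x ^ ℓ * α * x ^ (s - 1 - ℓ)) ∈ S := by
    intro s
    rcases s with _ | n
    · simpa using hS0
    · have hsum : (∑ ℓ ∈ Finset.range (n + 1), x ^ ℓ * α * x ^ (n + 1 - 1 - ℓ))
          = (∑ ℓ ∈ Finset.range (n + 1), (x ^ ℓ * α - α * x ^ ℓ) * x ^ (n - ℓ))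
            + (n + 1) • (α * x ^ n) := by
        rw [show ((n + 1) • (α * x ^ n) : Weyl F)
            = ∑ _ℓ ∈ Finset.range (n + 1), α * x ^ n by
          rw [Finset.sum_const, Finset.card_range], ← Finset.sum_add_distrib]
        refine Finset.sum_congr rfl fun ℓ hℓ => ?_
        have hln : ℓ ≤ n := Nat.lt_succ_iff.mp (Finset.mem_range.mp hℓ)
        have hx : x ^ ℓ * x ^ (n - ℓ) = x ^ n := by
          rw [← pow_add, Nat.add_sub_cancel' hln]
        have h2 : n + 1 - 1 - ℓ = n - ℓ := by omega
        rw [h2, ring6 x α ℓ (n - ℓ), hx]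
      have hzero : h.coeff (n + 1) • ((n + 1) • (α * x ^ n)) = 0 := by
        rw [← Nat.cast_smul_eq_nsmul F, smul_smul]
        have hd : h.coeff (n + 1) * (↑n + 1) = 0 := by
          have := congrArg (fun q => coeff q n) hder
          simpa [coeff_derivative] using this
        rw [show ((n + 1 : ℕ) : F) = (↑n + 1) by push_cast; ring, hd, zero_smul]
      rw [hsum, smul_add, hzero, add_zero]
      refine hSsmul _ _ (hSsum _ _ fun ℓ _ => hSxr _ (hcomm ℓ) _)
  have hrepr : Fm α h = ∑ s ∈ h.support, h.coeff s • Fm α (X ^ s) := by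
    conv_lhs => rw [h.as_sum_support]
    rw [map_sum]
    refine Finset.sum_congr rfl fun s _ => ?_
    rw [← C_mul_X_pow_eq_monomial, ← smul_eq_C_mul, map_smul]
  have hmem : Fm α h ∈ S := by
    rw [hrepr]
    refine hSsum _ _ fun s _ => ?_
    rw [hFm]
    exact hterm s
  rw [hSdef] at hmem
  exact hmem

/-- in characteristic `p > 0`, if `h' = 0` (i.e. `h ∈ F[x^p]`),
then the image of `D₂` equals `[x, A_h] + [ŷ, A_h]`. -/
theorem statement6 (h : F[X]) (hh : h ≠ 0) (p : ℕ) (hp : 0 < p) (hcp : CharP F p)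
    (hder : derivative h = 0)
    (Fm : Weyl F → (F[X] →ₗ[F] Weyl F))
    (hFm : ∀ (α : Weyl F) (s : ℕ), Fm α (X ^ s) =
      ∑ ℓ ∈ Finset.range s, wx F ^ ℓ * α * wx F ^ (s - 1 - ℓ)) :
    {c : Weyl F | ∃ α ∈ Ah F h, ∃ β ∈ Ah F h,
        c = (β * wx F - wx F * β) +
          ((wy F * aeval (wx F) h) * α - α * (wy F * aeval (wx F) h)) - Fm α h} =
      {c : Weyl F | ∃ b ∈ Ah F h, ∃ b' ∈ Ah F h,
        c = (wx F * b - b * wx F) +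
          ((wy F * aeval (wx F) h) * b' - b' * (wy F * aeval (wx F) h))} := by
  ext c
  simp only [Set.mem_setOf_eq]
  constructor
  · rintro ⟨α, hα, β, hβ, rfl⟩
    obtain ⟨b₀, hb₀, e⟩ := key_lemma F h hder Fm hFm α hα
    refine ⟨-β - b₀, sub_mem (neg_mem hβ) hb₀, α, hα, ?_⟩
    rw [e]; exact ring7 (wx F) (wy F * aeval (wx F) h) α β b₀
  · rintro ⟨b, hb, b', hb', rfl⟩
    obtain ⟨b₀, hb₀, e⟩ := key_lemma F h hder Fm hFm b' hb'
    refine ⟨b', hb', -(b + b₀), neg_mem (add_mem hb hb₀), ?_⟩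
    rw [e]; exact ring8 (wx F) (wy F * aeval (wx F) h) b b' b₀
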